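/- Fix λ > 0, a set of indices M ⊆ Fin p such that X_MᵀX_M is invertible (X_M being the submatrix of the columns of X indexed by M), and signs s_j ∈ {−1, +1} for j ∈ M. Given y ∈ ℝ^n, define b̂ = (X_MᵀX_M)⁻¹·(X_Mᵀy − λ·s_M) ∈ ℝ^M and let β̂ ∈ ℝ^p equal b̂ on M and 0 off M. Then β̂ is a lasso solution for (X, y, λ) with sign(β̂_j) = s_j for every j ∈ M if and only if: (i) s_j·b̂_j > 0 for every j ∈ M, and (ii) |x_jᵀ(y − X_M·b̂)| ≤ λ for every j ∉ M. -/

import Mathlib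

open scoped BigOperators

/-- The lasso objective `f_{X,y,λ}(β) = (1/2)‖y − Xβ‖₂² + λ∑|β_j|`. -/
noncomputable def lassoObj {n : ℕ} {κ : Type*} [Fintype κ]
    (X : Matrix (Fin n) κ ℝ) (y : Fin n → ℝ) (lam : ℝ) (β : κ → ℝ) : ℝ :=
  (1 / 2) * ∑ i, (y i - X.mulVec β i) ^ 2 + lam * ∑ j, |β j|

/-- A lasso solution is a global minimizer of the lasso objective. -/
def IsLassoSolution {n : ℕ} {κ : Type*} [Fintype κ]
    (X : Matrix (Fin n) κ ℝ) (y : Fin n → ℝ) (lam : ℝ) (βhat : κ → ℝ) : Prop :=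
  ∀ β : κ → ℝ, lassoObj X y lam βhat ≤ lassoObj X y lam β

/-- Exact second-order expansion of the lasso objective around a base point `b`. -/
lemma lasso_expand {n : ℕ} {κ : Type*} [Fintype κ]
    (X : Matrix (Fin n) κ ℝ) (y : Fin n → ℝ) (lam : ℝ) (b β : κ → ℝ) :
    lassoObj X y lam β = lassoObj X y lam b
      - ∑ j, (∑ i, X i j * (y i - X.mulVec b i)) * (β j - b j)
      + (1/2) * ∑ i, (X.mulVec (β - b) i)^2
      + lam * (∑ j, |β j| - ∑ j, |b j|) := by
  have hm : ∀ i, X.mulVec β i = X.mulVec b i + X.mulVec (β - b) i := by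
    intro i
    simp [Matrix.mulVec, dotProduct, mul_sub, Finset.sum_sub_distrib]
  have swap : ∑ j, (∑ i, X i j * (y i - X.mulVec b i)) * (β j - b j)
      = ∑ i, (y i - X.mulVec b i) * X.mulVec (β - b) i := by
    simp only [Finset.sum_mul, Matrix.mulVec, dotProduct, Finset.mul_sum]
    rw [Finset.sum_comm]
    congr 1; ext i; congr 1; ext j
    simp [Pi.sub_apply]; ring
  unfold lassoObj
  rw [swap]
  have hsq : ∀ i, (y i - X.mulVec β i)^2 = (y i - X.mulVec b i)^2
      - 2*((y i - X.mulVec b i) * X.mulVec (β - b) i) + (X.mulVec (β - b) i)^2 := by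
    intro i; rw [hm]; ring
  simp only [hsq, Finset.sum_add_distrib, Finset.sum_sub_distrib, ← Finset.mul_sum]
  ring

lemma sign_pos_of_eq_one' {x : ℝ} (h : Real.sign x = 1) : 0 < x := by
  rcases lt_trichotomy x 0 with h'|h'|h'
  · rw [Real.sign_of_neg h'] at h; norm_num at h
  · rw [h', Real.sign_zero] at h; norm_num at h
  · exact h'

lemma sign_neg_of_eq_neg_one' {x : ℝ} (h : Real.sign x = -1) : x < 0 := by
  rcases lt_trichotomy x 0 with h'|h'|h'
  · exact h'
  · rw [h', Real.sign_zero] at h; norm_num at h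
  · rw [Real.sign_of_pos h'] at h; norm_num at h

/-- Polyhedral characterization of the lasso selection event `{M̂ = M, ŝ = s}`:
with `b̂ = (X_MᵀX_M)⁻¹(X_Mᵀy − λs_M)` and `β̂` equal to `b̂` on `M` and `0` off `M`,
`β̂` is a lasso solution with signs `s` on `M` iff `s_j·b̂_j > 0` for `j ∈ M` and
`|x_jᵀ(y − X_M b̂)| ≤ λ` for `j ∉ M`. -/
theorem lasso_selection_event_polyhedral {n p : ℕ} (X : Matrix (Fin n) (Fin p) ℝ)
    (y : Fin n → ℝ) (lam : ℝ) (hlam : 0 < lam)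
    (M : Finset (Fin p))
    (XM : Matrix (Fin n) {j // j ∈ M} ℝ) (hXM : XM = Matrix.of fun i j => X i j.1)
    (hinv : IsUnit (XM.transpose * XM))
    (s : Fin p → ℝ) (hs : ∀ j ∈ M, s j = 1 ∨ s j = -1)
    (bhat : {j // j ∈ M} → ℝ)
    (hbhat : bhat = (XM.transpose * XM)⁻¹.mulVec
      (XM.transpose.mulVec y - lam • (fun j : {j // j ∈ M} => s j.1)))
    (βhat : Fin p → ℝ)
    (hβhat : βhat = fun j => if h : j ∈ M then bhat ⟨j, h⟩ else 0) :
    (IsLassoSolution X y lam βhat ∧ ∀ j (h : j ∈ M), Real.sign (βhat j) = s j) ↔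
      ((∀ j : {j // j ∈ M}, 0 < s j.1 * bhat j) ∧
       (∀ j ∉ M, |∑ i, X i j * (y i - XM.mulVec bhat i)| ≤ lam)) := by
  subst hXM
  -- `Xβ̂ = X_M b̂`
  have key1 : X.mulVec βhat
      = (Matrix.of fun i (j : {j // j ∈ M}) => X i j.1).mulVec bhat := by
    ext i
    rw [hβhat]
    simp only [Matrix.mulVec, dotProduct, Matrix.of_apply]
    rw [← Finset.sum_subset (Finset.subset_univ M) (by
      intro j _ hj; rw [dif_neg hj, mul_zero])]
    rw [← Finset.sum_attach M (fun j => X i j * if h : j ∈ M then bhat ⟨j, h⟩ else 0)]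
    rw [Finset.univ_eq_attach]
    exact Finset.sum_congr rfl (fun j _ => by rw [dif_pos j.2])
  -- stationarity on `M`: `x_jᵀ(y − Xβ̂) = λ s_j`
  have key2 : ∀ j : {j // j ∈ M},
      ∑ i, X i j.1 * (y i - X.mulVec βhat i) = lam * s j.1 := by
    intro j
    rw [key1]
    have hdet : IsUnit ((Matrix.of fun i (j : {j // j ∈ M}) => X i j.1).transpose
        * (Matrix.of fun i (j : {j // j ∈ M}) => X i j.1)).det :=
      (Matrix.isUnit_iff_isUnit_det _).mp hinv
    have h1 : (((Matrix.of fun i (j : {j // j ∈ M}) => X i j.1)).transpose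
          * (Matrix.of fun i (j : {j // j ∈ M}) => X i j.1)).mulVec bhat
        = (Matrix.of fun i (j : {j // j ∈ M}) => X i j.1).transpose.mulVec y
          - lam • (fun j : {j // j ∈ M} => s j.1) := by
      rw [hbhat, Matrix.mulVec_mulVec, Matrix.mul_nonsing_inv _ hdet, Matrix.one_mulVec]
    have h2 := congrFun h1 j
    rw [← Matrix.mulVec_mulVec] at h2
    simp only [Matrix.mulVec, dotProduct, Matrix.transpose_apply, Pi.sub_apply,
      Pi.smul_apply, smul_eq_mul, Matrix.of_apply] at h2 ⊢
    simp only [mul_sub, Finset.sum_sub_distrib]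
    linarith [h2]
  have hb : ∀ j : {j // j ∈ M}, βhat j.1 = bhat j := by
    intro j; rw [hβhat]; exact dif_pos j.2
  have hb0 : ∀ j ∉ M, βhat j = 0 := by
    intro j hj; rw [hβhat]; exact dif_neg hj
  constructor
  · rintro ⟨hmin, hsign⟩
    constructor
    · -- signs positive
      intro j
      have hs' := hsign j.1 j.2
      rw [hb j] at hs'
      rcases hs j.1 j.2 with h1 | h1
      · rw [h1] at hs' ⊢
        have := sign_pos_of_eq_one' hs'
        linarith
      · rw [h1] at hs' ⊢
        have := sign_neg_of_eq_neg_one' hs'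
        nlinarith
    · -- subgradient bound off `M`
      intro j hj
      rw [← key1]
      set g : ℝ := ∑ i, X i j * (y i - X.mulVec βhat i) with hg
      set c : ℝ := ∑ i, (X i j)^2 with hc
      have hcpos : 0 ≤ c := Finset.sum_nonneg (fun _ _ => sq_nonneg _)
      have hineq : ∀ t : ℝ, 0 ≤ -(g*t) + (1/2)*(c*t^2) + lam*|t| := by
        intro t
        set β' : Fin p → ℝ := βhat + Pi.single j t with hβ'
        have h1 := hmin β'
        have hexp := lasso_expand X y lam βhat β'
        have e1 : ∑ k, (∑ i, X i k * (y i - X.mulVec βhat i))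
            * (β' k - βhat k) = g * t := by
          rw [Finset.sum_eq_single j]
          · simp [hg, hβ']
          · intro k _ hk; simp [hβ', Pi.single_eq_of_ne hk]
          · intro h; exact absurd (Finset.mem_univ j) h
        have e2 : ∑ i, (X.mulVec (β' - βhat) i)^2 = c*t^2 := by
          have : β' - βhat = Pi.single j t := by
            ext k; simp [hβ']
          rw [this, hc, Finset.sum_mul]
          refine Finset.sum_congr rfl (fun i _ => ?_)
          rw [Matrix.mulVec_single]
          show (X i j * t)^2 = _
          ring
        have e3 : ∑ k, |β' k| - ∑ k, |βhat k| = |t| := by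
          rw [← Finset.sum_sub_distrib, Finset.sum_eq_single j]
          · simp [hβ', hb0 j hj]
          · intro k _ hk; simp [hβ', Pi.single_eq_of_ne hk]
          · intro h; exact absurd (Finset.mem_univ j) h
        rw [e1, e2, e3] at hexp
        rw [hexp] at h1
        linarith
      by_contra hcon
      push_neg at hcon
      set δ : ℝ := (|g| - lam)/(c+1) with hδ
      have hδpos : 0 < δ := div_pos (by linarith) (by linarith)
      have hδeq : δ * (c+1) = |g| - lam := div_mul_cancel₀ _ (by linarith)
      set t : ℝ := if 0 ≤ g then δ else -δ with ht
      have habs : |t| = δ := by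
        rw [ht]; split_ifs
        · exact abs_of_pos hδpos
        · rw [abs_neg]; exact abs_of_pos hδpos
      have hgt : g * t = |g| * δ := by
        rw [ht]; split_ifs with h
        · rw [abs_of_nonneg h]
        · rw [abs_of_neg (lt_of_not_ge h)]; ring
      have h2 := hineq t
      rw [hgt, habs] at h2
      have ht2 : t^2 = δ^2 := by rw [ht]; split_ifs <;> ring
      rw [ht2] at h2
      nlinarith [hδpos, hcpos]
  · rintro ⟨hpos, hbound⟩
    have hsign : ∀ j (h : j ∈ M), Real.sign (βhat j) = s j := by
      intro j h
      have hp := hpos ⟨j, h⟩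
      rw [← hb ⟨j, h⟩] at hp
      rcases hs j h with h1 | h1
      · rw [h1] at hp ⊢
        rw [Real.sign_of_pos (by linarith)]
      · rw [h1] at hp ⊢
        rw [Real.sign_of_neg (by nlinarith)]
    refine ⟨?_, hsign⟩
    intro β
    rw [lasso_expand X y lam βhat β]
    have quad : 0 ≤ (1/2) * ∑ i, (X.mulVec (β - βhat) i)^2 :=
      mul_nonneg (by norm_num) (Finset.sum_nonneg (fun _ _ => sq_nonneg _))
    have main : 0 ≤ -∑ j, (∑ i, X i j * (y i - X.mulVec βhat i)) * (β j - βhat j)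
        + lam * (∑ j, |β j| - ∑ j, |βhat j|) := by
      have e : -∑ j, (∑ i, X i j * (y i - X.mulVec βhat i)) * (β j - βhat j)
          + lam * (∑ j, |β j| - ∑ j, |βhat j|)
          = ∑ j, (lam * |β j| - lam * |βhat j|
              - (∑ i, X i j * (y i - X.mulVec βhat i)) * (β j - βhat j)) := by
        simp only [Finset.sum_sub_distrib, mul_sub, Finset.mul_sum]
        ring
      rw [e]
      refine Finset.sum_nonneg (fun j _ => ?_)
      by_cases hj : j ∈ M
      · rw [key2 ⟨j, hj⟩]
        have hp := hpos ⟨j, hj⟩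
        rw [← hb ⟨j, hj⟩] at hp
        rcases hs j hj with h1 | h1 <;> rw [h1] <;> rw [h1] at hp
        · have h2 : |βhat j| = βhat j := abs_of_pos (by linarith)
          have h3 : β j ≤ |β j| := le_abs_self _
          rw [h2]; nlinarith
        · have h2 : |βhat j| = -βhat j := abs_of_neg (by nlinarith)
          have h3 : -β j ≤ |β j| := neg_le_abs _
          rw [h2]; nlinarith
      · have hbd := hbound j hj
        rw [← key1] at hbd
        rw [hb0 j hj]
        have h3 : (∑ i, X i j * (y i - X.mulVec βhat i)) * β j
            ≤ |∑ i, X i j * (y i - X.mulVec βhat i)| * |β j| := by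
          calc (∑ i, X i j * (y i - X.mulVec βhat i)) * β j
              ≤ |(∑ i, X i j * (y i - X.mulVec βhat i)) * β j| := le_abs_self _
            _ = |∑ i, X i j * (y i - X.mulVec βhat i)| * |β j| := abs_mul _ _
        have h4 : |∑ i, X i j * (y i - X.mulVec βhat i)| * |β j| ≤ lam * |β j| :=
          mul_le_mul_of_nonneg_right hbd (abs_nonneg _)
        simp only [abs_zero, mul_zero, sub_zero]
        nlinarith
    linarith
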